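/- Let A be a ring of real-valued functions on a set X containing the constants, closed under absolute value, such that every radical ideal is absolutely convex. If m₁ and m₂ are distinct maximal ideals of A, then there exist bounded functions F₁ ∈ m₁ and F₂ ∈ m₂ with F₁ + F₂ = 1 and 0 ≤ F_i ≤ 1 pointwise. -/

import Mathlib

/-- In a ring of real-valued functions containing the constants, closed under absolute
value and division by functions `≥ 1`, in which radical ideals are absolutely convex:
for distinct maximal ideals `m₁ ≠ m₂` there are functions `F₁ ∈ m₁`, `F₂ ∈ m₂` with
`F₁ + F₂ = 1` and `0 ≤ Fᵢ ≤ 1` pointwise (in particular bounded). -/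
theorem stmt10 {X : Type*} (A : Subring (X → ℝ))
    (hconst : ∀ r : ℝ, (fun _ => r) ∈ A)
    (habs : ∀ f ∈ A, (fun x => |f x|) ∈ A)
    (hdiv : ∀ f ∈ A, ∀ g ∈ A, (∀ x, (1 : ℝ) ≤ g x) → (fun x => f x / g x) ∈ A)
    (hconv : ∀ a : Ideal A, a.IsRadical →
      ∀ f g : A, (∀ x, |(f : X → ℝ) x| ≤ |(g : X → ℝ) x|) → g ∈ a → f ∈ a)
    (m₁ m₂ : Ideal A) (h₁ : m₁.IsMaximal) (h₂ : m₂.IsMaximal) (hne : m₁ ≠ m₂) :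
    ∃ F₁ F₂ : A, F₁ ∈ m₁ ∧ F₂ ∈ m₂ ∧ F₁ + F₂ = 1 ∧
      (∀ x, 0 ≤ (F₁ : X → ℝ) x ∧ (F₁ : X → ℝ) x ≤ 1) ∧
      (∀ x, 0 ≤ (F₂ : X → ℝ) x ∧ (F₂ : X → ℝ) x ≤ 1) := by
  -- m₁ ⊔ m₂ = ⊤
  have hsup : m₁ ⊔ m₂ = ⊤ := h₁.coprime_of_ne h₂ hne
  have h1mem : (1 : A) ∈ m₁ ⊔ m₂ := by rw [hsup]; trivial
  obtain ⟨a, ha, b, hb, hab⟩ := Submodule.mem_sup.mp h1mem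
  -- f₁ = 2a ∈ m₁, f₂ = 2b ∈ m₂, f₁ + f₂ = 2 pointwise
  set two : A := ⟨fun _ => 2, hconst 2⟩ with htwo
  set f₁ : A := two * a with hf₁
  set f₂ : A := two * b with hf₂
  have hf₁m : f₁ ∈ m₁ := Ideal.mul_mem_left _ _ ha
  have hf₂m : f₂ ∈ m₂ := Ideal.mul_mem_left _ _ hb
  have hsum2 : ∀ x, (f₁ : X → ℝ) x + (f₂ : X → ℝ) x = 2 := by
    intro x
    have : (f₁ + f₂ : A) = two * 1 := by rw [hf₁, hf₂, ← mul_add, hab]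
    have := congrFun (congrArg (Subtype.val) this) x
    simpa using this
  -- g = f₁² + f₂²
  set g : A := f₁ * f₁ + f₂ * f₂ with hg
  have hg1 : ∀ x, (1 : ℝ) ≤ (g : X → ℝ) x := by
    intro x
    have h2 := hsum2 x
    have : (g : X → ℝ) x = (f₁ : X → ℝ) x * (f₁ : X → ℝ) x
        + (f₂ : X → ℝ) x * (f₂ : X → ℝ) x := rfl
    rw [this]
    nlinarith [sq_nonneg ((f₁ : X → ℝ) x - (f₂ : X → ℝ) x)]
  have hgx : ∀ x, (g : X → ℝ) x = (f₁ : X → ℝ) x * (f₁ : X → ℝ) x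
      + (f₂ : X → ℝ) x * (f₂ : X → ℝ) x := fun x => rfl
  have hgpos : ∀ x, (0 : ℝ) < (g : X → ℝ) x := fun x => lt_of_lt_of_le one_pos (hg1 x)
  -- key pointwise bound |fᵢ x| ≤ g x
  have hkey : ∀ (u v : X → ℝ), (∀ x, u x + v x = 2) →
      ∀ x, |u x| ≤ u x * u x + v x * v x := by
    intro u v hs x
    have h2 := hs x
    rcases abs_cases (u x) with ⟨he, _⟩ | ⟨he, _⟩ <;> rw [he] <;>
      nlinarith [sq_nonneg (u x - 1), sq_nonneg (v x - 1), sq_nonneg (u x + 1)]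
  -- define F₁, F₂
  have hF₁A : (fun x => (f₁ : X → ℝ) x * (f₁ : X → ℝ) x / (g : X → ℝ) x) ∈ A :=
    hdiv _ (mul_mem f₁.2 f₁.2) _ g.2 hg1
  have hF₂A : (fun x => (f₂ : X → ℝ) x * (f₂ : X → ℝ) x / (g : X → ℝ) x) ∈ A :=
    hdiv _ (mul_mem f₂.2 f₂.2) _ g.2 hg1
  set F₁ : A := ⟨_, hF₁A⟩ with hF₁
  set F₂ : A := ⟨_, hF₂A⟩ with hF₂
  have hbound : ∀ (f : A), (∀ x, |(f : X → ℝ) x| ≤ (g : X → ℝ) x) →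
      ∀ x, |(f : X → ℝ) x * (f : X → ℝ) x / (g : X → ℝ) x| ≤ |(f : X → ℝ) x| := by
    intro f hf x
    rw [abs_div, abs_of_pos (hgpos x), div_le_iff₀ (hgpos x), abs_mul]
    exact mul_le_mul_of_nonneg_left (hf x) (abs_nonneg _)
  have hb₁ : ∀ x, |(f₁ : X → ℝ) x| ≤ (g : X → ℝ) x := by
    intro x; rw [hgx x]; exact hkey _ _ hsum2 x
  have hb₂ : ∀ x, |(f₂ : X → ℝ) x| ≤ (g : X → ℝ) x := by
    intro x
    rw [hgx x, add_comm]
    exact hkey (f₂ : X → ℝ) (f₁ : X → ℝ) (fun y => by rw [add_comm]; exact hsum2 y) x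
  refine ⟨F₁, F₂, ?_, ?_, ?_, ?_, ?_⟩
  · exact hconv m₁ h₁.isPrime.isRadical F₁ f₁ (hbound f₁ hb₁) hf₁m
  · exact hconv m₂ h₂.isPrime.isRadical F₂ f₂ (hbound f₂ hb₂) hf₂m
  · ext x
    have : ((F₁ + F₂ : A) : X → ℝ) x =
        (f₁ : X → ℝ) x * (f₁ : X → ℝ) x / (g : X → ℝ) x
        + (f₂ : X → ℝ) x * (f₂ : X → ℝ) x / (g : X → ℝ) x := rfl
    rw [this, ← add_div, show ((1 : A) : X → ℝ) x = 1 from rfl,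
      div_eq_one_iff_eq (ne_of_gt (hgpos x)), hgx x]
  · intro x
    constructor
    · exact div_nonneg (mul_self_nonneg _) (le_of_lt (hgpos x))
    · rw [div_le_one (hgpos x)]
      rw [hgx x]; nlinarith [mul_self_nonneg ((f₂ : X → ℝ) x)]
  · intro x
    constructor
    · exact div_nonneg (mul_self_nonneg _) (le_of_lt (hgpos x))
    · rw [div_le_one (hgpos x)]
      rw [hgx x]; nlinarith [mul_self_nonneg ((f₁ : X → ℝ) x)]
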